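/- arXiv:0907.0578 — 10 statements merged into one kernel-verified Lean document; each statement's English description precedes it below -/
import Mathlib

section
/- In a finite geometry with at least two lines, the number of points is at most the number of lines: v ≤ b (theorem of de Bruijn and Erdős). -/
/-- A finite geometry (finite linear space): any two distinct points lie on exactly one
common line, and every line contains at least two points. -/
def IsGeometry {P : Type*} (lines : Finset (Finset P)) : Prop :=
  (∀ p q : P, p ≠ q → ∃! ℓ, ℓ ∈ lines ∧ p ∈ ℓ ∧ q ∈ ℓ) ∧
  (∀ ℓ ∈ lines, 2 ≤ ℓ.card)

/-- Theorem of de Bruijn and Erdős: in a finite geometry with at least two lines,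
the number of points is at most the number of lines. -/
theorem deBruijn_Erdos {P : Type*} [Fintype P] (lines : Finset (Finset P))
    (hgeom : IsGeometry lines) (hlines : 2 ≤ lines.card) :
    Fintype.card P ≤ lines.card := by
  classical
  obtain ⟨huniq, hcard⟩ := hgeom
  set L := {ℓ // ℓ ∈ lines}
  letI : Membership P L := ⟨fun ℓ p => p ∈ ℓ.1⟩
  have hmem : ∀ (p : P) (ℓ : L), p ∈ ℓ ↔ p ∈ ℓ.1 := fun _ _ => Iff.rfl
  -- any two distinct points lie on a unique line (as L)
  have huniq' : ∀ p q : P, p ≠ q → ∃! ℓ : L, p ∈ ℓ ∧ q ∈ ℓ := by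
    intro p q hpq
    obtain ⟨ℓ, ⟨hℓ, hp, hq⟩, hun⟩ := huniq p q hpq
    exact ⟨⟨ℓ, hℓ⟩, ⟨hp, hq⟩, fun m hm => Subtype.ext (hun m.1 ⟨m.2, hm.1, hm.2⟩)⟩
  -- two points of each line
  have htwo : ∀ ℓ : L, ∃ p q : P, p ≠ q ∧ p ∈ ℓ ∧ q ∈ ℓ := by
    intro ℓ
    obtain ⟨p, hp, q, hq, hpq⟩ := Finset.one_lt_card.mp (hcard ℓ.1 ℓ.2)
    exact ⟨p, q, hpq, hp, hq⟩
  have eq_or_eq : ∀ {p₁ p₂ : P} {l₁ l₂ : L},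
      p₁ ∈ l₁ → p₂ ∈ l₁ → p₁ ∈ l₂ → p₂ ∈ l₂ → p₁ = p₂ ∨ l₁ = l₂ := by
    intro p₁ p₂ l₁ l₂ h₁ h₂ h₃ h₄
    by_cases hpq : p₁ = p₂
    · exact Or.inl hpq
    · obtain ⟨ℓ, _, hun⟩ := huniq' p₁ p₂ hpq
      exact Or.inr ((hun l₁ ⟨h₁, h₂⟩).trans (hun l₂ ⟨h₃, h₄⟩).symm)
  -- there are two distinct lines
  obtain ⟨ℓ₁, hℓ₁, ℓ₂, hℓ₂, hne⟩ := Finset.one_lt_card.mp hlines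
  have hne' : (⟨ℓ₁, hℓ₁⟩ : L) ≠ ⟨ℓ₂, hℓ₂⟩ := fun h => hne (congrArg Subtype.val h)
  have exists_point : ∀ l : L, ∃ p, p ∉ l := by
    intro l
    have : ∃ l' : L, l' ≠ l := by
      by_cases h : l = ⟨ℓ₁, hℓ₁⟩
      · exact ⟨⟨ℓ₂, hℓ₂⟩, by rw [h]; exact hne'.symm⟩
      · exact ⟨⟨ℓ₁, hℓ₁⟩, fun h' => h h'.symm⟩
    obtain ⟨l', hl'⟩ := this
    obtain ⟨p, q, hpq, hp, hq⟩ := htwo l'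
    by_contra h
    push_neg at h
    rcases eq_or_eq (h p) (h q) hp hq with h' | h'
    · exact hpq h'
    · exact hl' h'.symm
  haveI : Configuration.Nondegenerate P L :=
    { exists_point := exists_point
      exists_line := by
        intro p
        by_cases h1 : p ∈ (⟨ℓ₁, hℓ₁⟩ : L)
        · by_cases h2 : p ∈ (⟨ℓ₂, hℓ₂⟩ : L)
          · obtain ⟨a, b, hab, ha, hb⟩ := htwo (⟨ℓ₁, hℓ₁⟩ : L)
            obtain ⟨c, d, hcd, hc, hd⟩ := htwo (⟨ℓ₂, hℓ₂⟩ : L)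
            -- pick a point on ℓ₁ other than p, and on ℓ₂ other than p
            have hq : ∃ q, q ∈ (⟨ℓ₁, hℓ₁⟩ : L) ∧ q ≠ p := by
              by_cases hap : a = p
              · exact ⟨b, hb, fun h => hab (hap.trans h.symm)⟩
              · exact ⟨a, ha, hap⟩
            have hr : ∃ r, r ∈ (⟨ℓ₂, hℓ₂⟩ : L) ∧ r ≠ p := by
              by_cases hcp : c = p
              · exact ⟨d, hd, fun h => hcd (hcp.trans h.symm)⟩
              · exact ⟨c, hc, hcp⟩
            obtain ⟨q, hqℓ, hqp⟩ := hq
            obtain ⟨r, hrℓ, hrp⟩ := hr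
            have hqr : q ≠ r := by
              intro h
              subst h
              rcases eq_or_eq h1 hqℓ h2 hrℓ with h' | h'
              · exact hqp h'.symm
              · exact hne' h'
            obtain ⟨m, ⟨hqm, hrm⟩, _⟩ := huniq' q r hqr
            refine ⟨m, fun hpm => ?_⟩
            have e1 : m = (⟨ℓ₁, hℓ₁⟩ : L) :=
              ((eq_or_eq hpm hqm h1 hqℓ).resolve_left (fun h => hqp h.symm))
            have e2 : m = (⟨ℓ₂, hℓ₂⟩ : L) :=
              ((eq_or_eq hpm hrm h2 hrℓ).resolve_left (fun h => hrp h.symm))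
            exact hne' (e1 ▸ e2)
          · exact ⟨⟨ℓ₂, hℓ₂⟩, h2⟩
        · exact ⟨⟨ℓ₁, hℓ₁⟩, h1⟩
      eq_or_eq := eq_or_eq }
  haveI : Configuration.HasLines P L :=
    { mkLine := fun {p q} h => (huniq' p q h).choose
      mkLine_ax := fun {p q} h => (huniq' p q h).choose_spec.1 }
  have := Configuration.HasLines.card_le (P := P) (L := L)
  simpa [L, Fintype.card_coe] using this
end

section
/- If a finite geometry has at least two lines and the number of points equals the number of lines (v = b), then any two distinct lines of the geometry intersect (have a common point). -/
open Finset

/-- Key counting lemma: if `p ∉ ℓ`, the lines through `p` that meet `ℓ` number at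
least `ℓ.card` (each point of `ℓ` is joined to `p` by a distinct such line). -/
lemma geom_key_le {P : Type*} [DecidableEq P] (lines : Finset (Finset P))
    (hgeom : IsGeometry lines) {ℓ : Finset P} (hℓ : ℓ ∈ lines) {p : P} (hp : p ∉ ℓ) :
    ℓ.card ≤ (lines.filter (fun m => p ∈ m ∧ ∃ q ∈ m, q ∈ ℓ)).card := by
  classical
  have hne : ∀ q ∈ ℓ, p ≠ q := by rintro q hq rfl; exact hp hq
  set f : P → Finset P := fun q => if h : p ≠ q then (hgeom.1 p q h).choose else ℓ with hf
  have hfspec : ∀ q ∈ ℓ, f q ∈ lines ∧ p ∈ f q ∧ q ∈ f q := by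
    intro q hq
    have h := hne q hq
    simp only [hf, dif_pos h]
    exact (hgeom.1 p q h).choose_spec.1
  apply Finset.card_le_card_of_injOn f
  · intro q hq
    obtain ⟨h1, h2, h3⟩ := hfspec q hq
    simp only [mem_coe, mem_filter]
    exact ⟨h1, h2, q, h3, hq⟩
  · intro q1 hq1 q2 hq2 heq
    by_contra hne'
    obtain ⟨h1, h2, h3⟩ := hfspec q1 hq1
    obtain ⟨h1', h2', h3'⟩ := hfspec q2 hq2
    have huniq := hgeom.1 q1 q2 hne'
    have e1 : f q1 = huniq.choose := huniq.choose_spec.2 _ ⟨h1, h3, heq ▸ h3'⟩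
    have e2 : ℓ = huniq.choose := huniq.choose_spec.2 _ ⟨hℓ, hq1, hq2⟩
    exact hp (e2 ▸ e1 ▸ h2)

/-- In a finite geometry with at least two lines and as many points as lines,
any two distinct lines intersect. -/
theorem lines_intersect_of_card_eq {P : Type*} [Fintype P] (lines : Finset (Finset P))
    (hgeom : IsGeometry lines) (hlines : 2 ≤ lines.card)
    (hvb : Fintype.card P = lines.card) :
    ∀ ℓ₁ ∈ lines, ∀ ℓ₂ ∈ lines, ℓ₁ ≠ ℓ₂ → ∃ p, p ∈ ℓ₁ ∧ p ∈ ℓ₂ := by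
  classical
  set v := Fintype.card P with hv
  set b := lines.card with hb
  set r : P → ℕ := fun p => (lines.filter (fun m => p ∈ m)).card with hr
  -- r p ≥ k ℓ whenever p ∉ ℓ
  have hrk : ∀ ℓ ∈ lines, ∀ p : P, p ∉ ℓ → ℓ.card ≤ r p := by
    intro ℓ hℓ p hp
    refine le_trans (geom_key_le lines hgeom hℓ hp) (Finset.card_le_card ?_)
    intro m hm
    simp only [mem_filter] at hm ⊢
    exact ⟨hm.1, hm.2.1⟩
  -- every line misses a point: k ℓ < v
  have hkv : ∀ ℓ ∈ lines, ℓ.card < v := by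
    intro ℓ hℓ
    rcases lt_or_ge ℓ.card v with h | h
    · exact h
    · exfalso
      have hall : ∀ q : P, q ∈ ℓ := by
        have : ℓ = Finset.univ := Finset.eq_univ_of_card ℓ
          (le_antisymm (Finset.card_le_univ ℓ) h)
        simp [this]
      obtain ⟨m, hm, hmne⟩ : ∃ m ∈ lines, m ≠ ℓ := by
        by_contra hc
        push_neg at hc
        have : lines ⊆ {ℓ} := fun x hx => by simp [hc x hx]
        have := Finset.card_le_card this
        simp at this
        omega
      obtain ⟨x, hx, y, hy, hxy⟩ := Finset.one_lt_card.mp (hgeom.2 m hm)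
      have huniq := hgeom.1 x y hxy
      have e1 : m = huniq.choose := huniq.choose_spec.2 _ ⟨hm, hx, hy⟩
      have e2 : ℓ = huniq.choose := huniq.choose_spec.2 _ ⟨hℓ, hall x, hall y⟩
      exact hmne (e1.trans e2.symm)
  -- every point misses a line: r p < b
  have hrb : ∀ p : P, r p < b := by
    intro p
    rcases lt_or_ge (r p) b with h | h
    · exact h
    · exfalso
      have hall : ∀ m ∈ lines, p ∈ m := by
        have : lines.filter (fun m => p ∈ m) = lines :=
          Finset.eq_of_subset_of_card_le (Finset.filter_subset _ _) h
        intro m hm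
        have := this ▸ hm
        exact (Finset.mem_filter.mp (this)).2
      have hdisj : ∀ m₁ ∈ lines, ∀ m₂ ∈ lines, m₁ ≠ m₂ →
          Disjoint (m₁.erase p) (m₂.erase p) := by
        intro m₁ h₁ m₂ h₂ hne12
        rw [Finset.disjoint_left]
        intro q hq1 hq2
        have hqp : q ≠ p := Finset.ne_of_mem_erase hq1
        have huniq := hgeom.1 p q (Ne.symm hqp)
        have e1 : m₁ = huniq.choose :=
          huniq.choose_spec.2 _ ⟨h₁, hall m₁ h₁, Finset.mem_of_mem_erase hq1⟩
        have e2 : m₂ = huniq.choose :=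
          huniq.choose_spec.2 _ ⟨h₂, hall m₂ h₂, Finset.mem_of_mem_erase hq2⟩
        exact hne12 (e1.trans e2.symm)
      have hcard : (lines.biUnion (fun m => m.erase p)).card =
          ∑ m ∈ lines, (m.erase p).card := Finset.card_biUnion hdisj
      have hle1 : ∀ m ∈ lines, 1 ≤ (m.erase p).card := by
        intro m hm
        have := hgeom.2 m hm
        have := Finset.card_erase_of_mem (hall m hm)
        omega
      have hsum : b ≤ ∑ m ∈ lines, (m.erase p).card := by
        calc b = ∑ m ∈ lines, 1 := by simp [hb]
        _ ≤ _ := Finset.sum_le_sum hle1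
      have hsub : lines.biUnion (fun m => m.erase p) ⊆ Finset.univ.erase p := by
        intro q hq
        simp only [Finset.mem_biUnion] at hq
        obtain ⟨m, _, hqm⟩ := hq
        exact Finset.mem_erase.mpr ⟨Finset.ne_of_mem_erase hqm, Finset.mem_univ q⟩
      have := Finset.card_le_card hsub
      rw [hcard] at this
      have : (Finset.univ.erase p).card = v - 1 := by
        rw [Finset.card_erase_of_mem (Finset.mem_univ p)]
        rfl
      omega
  -- the counting argument: r p = k ℓ for every non-incident pair
  have hmain : ∀ ℓ ∈ lines, ∀ p : P, p ∉ ℓ → r p = ℓ.card := by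
    set f : P × Finset P → ℚ := fun x => 1 / (v - x.2.card : ℕ) with hf
    set g : P × Finset P → ℚ := fun x => 1 / (b - r x.1 : ℕ) with hg
    set S := (Finset.univ ×ˢ lines).filter (fun x => x.1 ∉ x.2) with hS
    have hsumf : ∑ x ∈ S, f x = b := by
      rw [hS, Finset.sum_filter, Finset.sum_product_right]
      have : ∀ ℓ ∈ lines, ∑ p : P, (if p ∉ ℓ then f (p, ℓ) else 0) = 1 := by
        intro ℓ hℓ
        rw [Finset.sum_ite, Finset.sum_const_zero, add_zero]
        simp only [hf]
        rw [Finset.sum_const]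
        have hc : (Finset.univ.filter (fun p => p ∉ ℓ)).card = v - ℓ.card := by
          have : Finset.univ.filter (fun p => p ∉ ℓ) = ℓᶜ := by
            ext x; simp
          rw [this, Finset.card_compl, hv]
        rw [hc]
        have hpos : (0:ℕ) < v - ℓ.card := by have := hkv ℓ hℓ; omega
        rw [nsmul_eq_mul, mul_one_div_cancel (Nat.cast_ne_zero.mpr hpos.ne')]
      rw [Finset.sum_congr rfl (fun ℓ h => this ℓ h)]
      simp [hb]
    have hsumg : ∑ x ∈ S, g x = v := by
      rw [hS, Finset.sum_filter, Finset.sum_product]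
      have : ∀ p : P, ∑ ℓ ∈ lines, (if p ∉ ℓ then g (p, ℓ) else 0) = 1 := by
        intro p
        rw [Finset.sum_ite, Finset.sum_const_zero, add_zero]
        simp only [hg]
        rw [Finset.sum_const]
        have hc : (lines.filter (fun ℓ => p ∉ ℓ)).card = b - r p := by
          have h1 : lines.filter (fun ℓ => p ∉ ℓ) = lines \ lines.filter (fun m => p ∈ m) := by
            ext m; simp [Finset.mem_sdiff]; tauto
          rw [h1, Finset.card_sdiff_of_subset (Finset.filter_subset _ _), hb, hr]
        rw [hc]
        have hpos : (0:ℕ) < b - r p := by have := hrb p; omega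
        rw [nsmul_eq_mul, mul_one_div_cancel (Nat.cast_ne_zero.mpr hpos.ne')]
      rw [Finset.sum_congr rfl (fun p _ => this p)]
      simp [hv]
    have hle : ∀ x ∈ S, f x ≤ g x := by
      intro x hx
      rw [hS, Finset.mem_filter, Finset.mem_product] at hx
      obtain ⟨⟨-, hx2⟩, hx3⟩ := hx
      have h1 : x.2.card ≤ r x.1 := hrk x.2 hx2 x.1 hx3
      have h2 : r x.1 < b := hrb x.1
      have h3 : x.2.card < v := hkv x.2 hx2
      rw [hf, hg]
      apply one_div_le_one_div_of_le
      · exact_mod_cast Nat.sub_pos_of_lt h2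
      · exact_mod_cast by omega
    have heq : ∀ x ∈ S, f x = g x := by
      rw [← Finset.sum_eq_sum_iff_of_le hle]
      rw [hsumf, hsumg]
      exact_mod_cast hvb.symm
    intro ℓ hℓ p hp
    have hx : (p, ℓ) ∈ S := by
      rw [hS, Finset.mem_filter, Finset.mem_product]
      exact ⟨⟨Finset.mem_univ p, hℓ⟩, hp⟩
    have := heq (p, ℓ) hx
    rw [hf, hg] at this
    simp only at this
    have h2 : r p < b := hrb p
    have h3 : ℓ.card < v := hkv ℓ hℓ
    have hnat : v - ℓ.card = b - r p := by
      have hv0 : ((v - ℓ.card : ℕ) : ℚ) ≠ 0 := by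
        exact_mod_cast (Nat.cast_ne_zero (R:=ℚ)).mpr (by omega)
      have hb0 : ((b - r p : ℕ) : ℚ) ≠ 0 := by
        exact_mod_cast (Nat.cast_ne_zero (R:=ℚ)).mpr (by omega)
      field_simp at this
      exact_mod_cast this.symm
    omega
  -- conclude: two disjoint lines give a contradiction
  intro ℓ₁ hℓ₁ ℓ₂ hℓ₂ hne12
  by_contra hdisj
  push_neg at hdisj
  obtain ⟨p, hp2⟩ : ∃ p, p ∈ ℓ₂ := Finset.card_pos.mp (by have := hgeom.2 ℓ₂ hℓ₂; omega)
  have hp1 : p ∉ ℓ₁ := fun h => hdisj p h hp2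
  have heq1 : r p = ℓ₁.card := hmain ℓ₁ hℓ₁ p hp1
  have hkey := geom_key_le lines hgeom hℓ₁ hp1
  -- the lines through p meeting ℓ₁ don't include ℓ₂, so their number is < r p
  have hsub : lines.filter (fun m => p ∈ m ∧ ∃ q ∈ m, q ∈ ℓ₁) ⊆
      (lines.filter (fun m => p ∈ m)).erase ℓ₂ := by
    intro m hm
    simp only [Finset.mem_filter] at hm
    refine Finset.mem_erase.mpr ⟨?_, Finset.mem_filter.mpr ⟨hm.1, hm.2.1⟩⟩
    rintro rfl
    obtain ⟨q, hq1, hq2⟩ := hm.2.2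
    exact hdisj q hq2 hq1
  have hlt := Finset.card_le_card hsub
  have hmem2 : ℓ₂ ∈ lines.filter (fun m => p ∈ m) := Finset.mem_filter.mpr ⟨hℓ₂, hp2⟩
  have := Finset.card_erase_of_mem hmem2
  have hk2 := hgeom.2 ℓ₁ hℓ₁
  have hrp : r p = (lines.filter (fun m => p ∈ m)).card := rfl
  omega
end

section
/- If in a finite geometry with at least two lines any two distinct lines intersect (have a common point), then the number of points equals the number of lines: v = b. -/
/-- If in a finite geometry with at least two lines any two distinct lines intersect,
then the number of points equals the number of lines. -/
theorem card_eq_of_lines_intersect {P : Type*} [Fintype P] (lines : Finset (Finset P))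
    (hgeom : IsGeometry lines) (hlines : 2 ≤ lines.card)
    (hint : ∀ ℓ₁ ∈ lines, ∀ ℓ₂ ∈ lines, ℓ₁ ≠ ℓ₂ → ∃ p, p ∈ ℓ₁ ∧ p ∈ ℓ₂) :
    Fintype.card P = lines.card := by
  classical
  obtain ⟨huniq, hsize⟩ := hgeom
  set v := Fintype.card P with hv
  set b := lines.card with hb
  -- two lines sharing two distinct points are equal
  have htwo : ∀ m ∈ lines, ∀ n ∈ lines, ∀ x y : P, x ≠ y → x ∈ m → y ∈ m →
      x ∈ n → y ∈ n → m = n := by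
    intro m hm n hn x y hxy hxm hym hxn hyn
    obtain ⟨ℓ, -, hu⟩ := huniq x y hxy
    rw [hu m ⟨hm, hxm, hym⟩, hu n ⟨hn, hxn, hyn⟩]
  -- two distinct lines
  obtain ⟨ℓ₁, h1, ℓ₂, h2, hne12⟩ := Finset.one_lt_card.mp hlines
  -- every line misses some point
  have nofull : ∀ ℓ ∈ lines, ∃ p, p ∉ ℓ := by
    intro ℓ hℓ
    by_contra hfull
    push_neg at hfull
    obtain ⟨m, hm, hmne⟩ := Finset.exists_mem_ne hlines ℓ
    obtain ⟨x, hx, y, hy, hxy⟩ := Finset.one_lt_card.mp (hsize m hm)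
    exact hmne (htwo m hm ℓ hℓ x y hxy hx hy (hfull x) (hfull y))
  -- no point lies on all lines
  have noall : ∀ p : P, ∃ ℓ ∈ lines, p ∉ ℓ := by
    intro p
    by_contra hall
    push_neg at hall
    obtain ⟨q, hq1, hqp⟩ := Finset.exists_mem_ne (hsize ℓ₁ h1) p
    obtain ⟨s, hs2, hsp⟩ := Finset.exists_mem_ne (hsize ℓ₂ h2) p
    by_cases hqs : q = s
    · exact hne12 (htwo ℓ₁ h1 ℓ₂ h2 p q (Ne.symm hqp) (hall ℓ₁ h1) hq1
        (hall ℓ₂ h2) (hqs ▸ hs2))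
    · obtain ⟨m, ⟨hm, hqm, hsm⟩, -⟩ := huniq q s hqs
      have hpm : p ∈ m := hall m hm
      have e1 : m = ℓ₁ := htwo m hm ℓ₁ h1 p q (Ne.symm hqp) hpm hqm (hall ℓ₁ h1) hq1
      have e2 : m = ℓ₂ := htwo m hm ℓ₂ h2 p s (Ne.symm hsp) hpm hsm (hall ℓ₂ h2) hs2
      exact hne12 (e1 ▸ e2)
  -- number of lines through a point
  set r : P → ℕ := fun p => (lines.filter (fun m => p ∈ m)).card with hr
  -- key: for p ∉ ℓ, the number of lines through p equals |ℓ|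
  have key : ∀ ℓ ∈ lines, ∀ p : P, p ∉ ℓ → r p = ℓ.card := by
    intro ℓ hℓ p hp
    set pt : Finset P → P := fun m => if h : ∃ q, q ∈ m ∧ q ∈ ℓ then h.choose else p
      with hpt
    have hptspec : ∀ m ∈ lines, p ∈ m → pt m ∈ m ∧ pt m ∈ ℓ := by
      intro m hm hpm
      have hmne : m ≠ ℓ := by rintro rfl; exact hp hpm
      have hex : ∃ q, q ∈ m ∧ q ∈ ℓ := hint m hm ℓ hℓ hmne
      simp only [hpt, dif_pos hex]
      exact hex.choose_spec
    apply Finset.card_bij (i := fun m _ => pt m)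
    · intro m hm
      exact (hptspec m (Finset.mem_filter.mp hm).1 (Finset.mem_filter.mp hm).2).2
    · intro m₁ hm₁ m₂ hm₂ heq
      obtain ⟨hm₁l, hpm₁⟩ := Finset.mem_filter.mp hm₁
      obtain ⟨hm₂l, hpm₂⟩ := Finset.mem_filter.mp hm₂
      have hx1 := hptspec m₁ hm₁l hpm₁
      have hx2 := hptspec m₂ hm₂l hpm₂
      rw [← heq] at hx2
      have hpx : p ≠ pt m₁ := by intro h; exact hp (h ▸ hx1.2)
      exact htwo m₁ hm₁l m₂ hm₂l p (pt m₁) hpx hpm₁ hx1.1 hpm₂ hx2.1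
    · intro q hq
      have hpq : p ≠ q := by rintro rfl; exact hp hq
      obtain ⟨m, ⟨hm, hpm, hqm⟩, -⟩ := huniq p q hpq
      have hmf : m ∈ lines.filter (fun m => p ∈ m) := Finset.mem_filter.mpr ⟨hm, hpm⟩
      refine ⟨m, hmf, ?_⟩
      have hxs := hptspec m hm hpm
      by_contra hxq
      have : m = ℓ := htwo m hm ℓ hℓ (pt m) q hxq hxs.1 hqm hxs.2 hq
      exact hp (this ▸ hpm)
  -- basic numerics
  have hb0 : 0 < b := lt_of_lt_of_le (by norm_num) hlines
  have hkv : ∀ ℓ ∈ lines, ℓ.card < v := by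
    intro ℓ hℓ
    obtain ⟨p, hp⟩ := nofull ℓ hℓ
    exact Finset.card_lt_card (Finset.ssubset_univ_iff.mpr
      (fun h => hp (h ▸ Finset.mem_univ p)))
  have hv0 : 0 < v := lt_of_le_of_lt (Nat.zero_le _) (hkv ℓ₁ h1)
  have hrb : ∀ p : P, r p < b := by
    intro p
    obtain ⟨ℓ, hℓ, hp⟩ := noall p
    apply Finset.card_lt_card
    refine ⟨Finset.filter_subset _ _, fun hsub => ?_⟩
    exact hp (Finset.mem_filter.mp (hsub hℓ)).2
  -- the two weight functions on pairs
  set F : Finset P × P → ℚ := fun x =>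
    if x.2 ∈ x.1 then 0 else ((b : ℚ) * ((v : ℚ) - (x.1.card : ℚ)))⁻¹ with hF
  set G : Finset P × P → ℚ := fun x =>
    if x.2 ∈ x.1 then 0 else ((v : ℚ) * ((b : ℚ) - (r x.2 : ℚ)))⁻¹ with hG
  have sumF : ∑ x ∈ lines ×ˢ Finset.univ, F x = 1 := by
    rw [Finset.sum_product]
    have inner : ∀ ℓ ∈ lines, (∑ p : P, F (ℓ, p)) = (b : ℚ)⁻¹ := by
      intro ℓ hℓ
      have hcard : (Finset.univ.filter (fun p => p ∉ ℓ)).card = v - ℓ.card := by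
        rw [show Finset.univ.filter (fun p => p ∉ ℓ) = ℓᶜ by
          ext p; simp [Finset.mem_compl]]
        exact Finset.card_compl ℓ
      have hne : ((v : ℚ) - (ℓ.card : ℚ)) ≠ 0 := by
        have := hkv ℓ hℓ
        have : (ℓ.card : ℚ) < (v : ℚ) := by exact_mod_cast this
        linarith
      calc (∑ p : P, F (ℓ, p))
          = ((v - ℓ.card : ℕ) : ℚ) * ((b : ℚ) * ((v : ℚ) - (ℓ.card : ℚ)))⁻¹ := by
            rw [hF]
            simp only
            rw [Finset.sum_ite, Finset.sum_const, Finset.sum_const, smul_zero,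
              zero_add, hcard, nsmul_eq_mul]
        _ = (b : ℚ)⁻¹ := by
            rw [Nat.cast_sub (le_of_lt (hkv ℓ hℓ))]
            rw [mul_inv]
            rw [mul_comm ((b:ℚ))⁻¹ _, ← mul_assoc, mul_inv_cancel₀ hne, one_mul]
    rw [Finset.sum_congr rfl inner, Finset.sum_const, nsmul_eq_mul]
    rw [mul_inv_cancel₀ (by exact_mod_cast hb0.ne' : (b : ℚ) ≠ 0)]
  have sumG : ∑ x ∈ lines ×ˢ Finset.univ, G x = 1 := by
    rw [Finset.sum_product, Finset.sum_comm]
    have inner : ∀ p : P, (∑ ℓ ∈ lines, G (ℓ, p)) = (v : ℚ)⁻¹ := by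
      intro p
      have hcard : (lines.filter (fun ℓ => p ∉ ℓ)).card = b - r p := by
        have h2 : lines.filter (fun ℓ => p ∉ ℓ)
            = lines \ lines.filter (fun ℓ => p ∈ ℓ) := by
          ext m
          simp [Finset.mem_sdiff, Finset.mem_filter, and_comm]
          tauto
        rw [h2, Finset.card_sdiff_of_subset (Finset.filter_subset _ _)]
      have hne : ((b : ℚ) - (r p : ℚ)) ≠ 0 := by
        have : ((r p : ℚ)) < (b : ℚ) := by exact_mod_cast hrb p
        linarith
      calc (∑ ℓ ∈ lines, G (ℓ, p))
          = ((b - r p : ℕ) : ℚ) * ((v : ℚ) * ((b : ℚ) - (r p : ℚ)))⁻¹ := by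
            rw [hG]
            simp only
            rw [Finset.sum_ite, Finset.sum_const, Finset.sum_const, smul_zero,
              zero_add, hcard, nsmul_eq_mul]
        _ = (v : ℚ)⁻¹ := by
            rw [Nat.cast_sub (le_of_lt (hrb p))]
            rw [mul_inv]
            rw [mul_comm ((v:ℚ))⁻¹ _, ← mul_assoc, mul_inv_cancel₀ hne, one_mul]
    rw [Finset.sum_congr rfl (fun p _ => inner p), Finset.sum_const, nsmul_eq_mul]
    rw [Finset.card_univ, mul_inv_cancel₀ (by exact_mod_cast hv0.ne' : (v : ℚ) ≠ 0)]
  -- a non-incident pair exists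
  obtain ⟨p₀, hp₀⟩ := nofull ℓ₁ h1
  have hpair : (ℓ₁, p₀) ∈ lines ×ˢ (Finset.univ : Finset P) :=
    Finset.mem_product.mpr ⟨h1, Finset.mem_univ _⟩
  -- termwise comparison
  have hterm : ∀ ℓ ∈ lines, ∀ p : P, p ∉ ℓ →
      ((b : ℚ) * ((v : ℚ) - (ℓ.card : ℚ))) ≠ ((v : ℚ) * ((b : ℚ) - (ℓ.card : ℚ))) →
      True := fun _ _ _ _ _ => trivial
  rcases lt_trichotomy v b with hlt | heq | hgt
  · -- v < b : F > G pointwise on non-incident pairs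
    exfalso
    have hFG : ∀ x ∈ lines ×ˢ (Finset.univ : Finset P), G x ≤ F x := by
      intro x hx
      obtain ⟨hxl, -⟩ := Finset.mem_product.mp hx
      by_cases hmem : x.2 ∈ x.1
      · simp [hF, hG, hmem]
      · have hk := key x.1 hxl x.2 hmem
        have hk2 : 2 ≤ x.1.card := hsize x.1 hxl
        have hkvx := hkv x.1 hxl
        have hkb : x.1.card < b := hk ▸ hrb x.2
        simp only [hF, hG, if_neg hmem, hk]
        have c1 : ((x.1.card : ℚ)) < (v : ℚ) := by exact_mod_cast hkvx
        have c2 : ((x.1.card : ℚ)) < (b : ℚ) := by exact_mod_cast hkb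
        have c3 : (v : ℚ) < (b : ℚ) := by exact_mod_cast hlt
        have c4 : (0 : ℚ) < (x.1.card : ℚ) := by
          exact_mod_cast lt_of_lt_of_le (by norm_num) hk2
        apply le_of_lt
        apply inv_strictAnti₀
        · exact mul_pos (by linarith) (by linarith)
        · nlinarith
    have hstrict : G (ℓ₁, p₀) < F (ℓ₁, p₀) := by
      have hk := key ℓ₁ h1 p₀ hp₀
      have hk2 : 2 ≤ ℓ₁.card := hsize ℓ₁ h1
      have hkvx := hkv ℓ₁ h1
      have hkb : ℓ₁.card < b := hk ▸ hrb p₀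
      simp only [hF, hG, if_neg hp₀, hk]
      have c1 : ((ℓ₁.card : ℚ)) < (v : ℚ) := by exact_mod_cast hkvx
      have c2 : ((ℓ₁.card : ℚ)) < (b : ℚ) := by exact_mod_cast hkb
      have c3 : ((v : ℚ)) < (b : ℚ) := by exact_mod_cast hlt
      have c4 : (0 : ℚ) < (ℓ₁.card : ℚ) := by
        exact_mod_cast lt_of_lt_of_le (by norm_num) hk2
      apply inv_strictAnti₀
      · exact mul_pos (by linarith) (by linarith)
      · nlinarith
    have := Finset.sum_lt_sum hFG ⟨(ℓ₁, p₀), hpair, hstrict⟩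
    rw [sumF, sumG] at this
    exact lt_irrefl 1 this
  · exact heq
  · -- b < v : G > F pointwise on non-incident pairs
    exfalso
    have hFG : ∀ x ∈ lines ×ˢ (Finset.univ : Finset P), F x ≤ G x := by
      intro x hx
      obtain ⟨hxl, -⟩ := Finset.mem_product.mp hx
      by_cases hmem : x.2 ∈ x.1
      · simp [hF, hG, hmem]
      · have hk := key x.1 hxl x.2 hmem
        have hk2 : 2 ≤ x.1.card := hsize x.1 hxl
        have hkvx := hkv x.1 hxl
        have hkb : x.1.card < b := hk ▸ hrb x.2
        simp only [hF, hG, if_neg hmem, hk]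
        have c1 : ((x.1.card : ℚ)) < (v : ℚ) := by exact_mod_cast hkvx
        have c2 : ((x.1.card : ℚ)) < (b : ℚ) := by exact_mod_cast hkb
        have c3 : ((b : ℚ)) < (v : ℚ) := by exact_mod_cast hgt
        have c4 : (0 : ℚ) < (x.1.card : ℚ) := by
          exact_mod_cast lt_of_lt_of_le (by norm_num) hk2
        apply le_of_lt
        apply inv_strictAnti₀
        · exact mul_pos (by linarith) (by linarith)
        · nlinarith
    have hstrict : F (ℓ₁, p₀) < G (ℓ₁, p₀) := by
      have hk := key ℓ₁ h1 p₀ hp₀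
      have hk2 : 2 ≤ ℓ₁.card := hsize ℓ₁ h1
      have hkvx := hkv ℓ₁ h1
      have hkb : ℓ₁.card < b := hk ▸ hrb p₀
      simp only [hF, hG, if_neg hp₀, hk]
      have c1 : ((ℓ₁.card : ℚ)) < (v : ℚ) := by exact_mod_cast hkvx
      have c2 : ((ℓ₁.card : ℚ)) < (b : ℚ) := by exact_mod_cast hkb
      have c3 : ((b : ℚ)) < (v : ℚ) := by exact_mod_cast hgt
      have c4 : (0 : ℚ) < (ℓ₁.card : ℚ) := by
        exact_mod_cast lt_of_lt_of_le (by norm_num) hk2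
      apply inv_strictAnti₀
      · exact mul_pos (by linarith) (by linarith)
      · nlinarith
    have := Finset.sum_lt_sum hFG ⟨(ℓ₁, p₀), hpair, hstrict⟩
    rw [sumF, sumG] at this
    exact lt_irrefl 1 this
end

section
/- In every finite geometry with at least two lines there exists an injection σ from the point set P to the line set 𝓛 such that every point p is incident with its image line: p ∈ σ(p) (theorem of Bleijenga). -/
/-- Theorem of Bleijenga: in every finite geometry with at least two lines there is an
injection σ from the points to the lines such that every point lies on its image line. -/
theorem bleijenga {P : Type*} [Fintype P] (lines : Finset (Finset P))
    (hgeom : IsGeometry lines) (hlines : 2 ≤ lines.card) :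
    ∃ σ : P → Finset P, Function.Injective σ ∧ ∀ p : P, σ p ∈ lines ∧ p ∈ σ p := by
  classical
  obtain ⟨huniq, hcard⟩ := hgeom
  -- the chosen line through two distinct points
  have hex : ∀ p q : P, p ≠ q → ∃ ℓ, ℓ ∈ lines ∧ p ∈ ℓ ∧ q ∈ ℓ :=
    fun p q h => (huniq p q h).exists
  set lfun : ∀ p q : P, p ≠ q → Finset P := fun p q h => (hex p q h).choose with hlfun
  have lfun_spec : ∀ (p q : P) (h : p ≠ q),
      lfun p q h ∈ lines ∧ p ∈ lfun p q h ∧ q ∈ lfun p q h :=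
    fun p q h => (hex p q h).choose_spec
  -- uniqueness of lines through two distinct points
  have hu : ∀ {p q : P} {ℓ₁ ℓ₂ : Finset P}, p ≠ q → ℓ₁ ∈ lines → ℓ₂ ∈ lines →
      p ∈ ℓ₁ → q ∈ ℓ₁ → p ∈ ℓ₂ → q ∈ ℓ₂ → ℓ₁ = ℓ₂ := by
    intro p q ℓ₁ ℓ₂ h h₁ h₂ hp₁ hq₁ hp₂ hq₂
    obtain ⟨ℓ, -, hℓu⟩ := huniq p q h
    rw [hℓu ℓ₁ ⟨h₁, hp₁, hq₁⟩, hℓu ℓ₂ ⟨h₂, hp₂, hq₂⟩]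
  -- there are at least two points
  obtain ⟨ℓ₀, hℓ₀⟩ : lines.Nonempty := Finset.card_pos.mp (by omega)
  obtain ⟨a₀, ha₀, b₀, hb₀, hab₀⟩ := Finset.one_lt_card.mp (hcard ℓ₀ hℓ₀)
  have hother : ∀ p : P, ∃ q : P, q ≠ p := by
    intro p
    by_cases h : p = a₀
    · exact ⟨b₀, fun hh => hab₀ (h ▸ hh).symm⟩
    · exact ⟨a₀, fun hh => h hh.symm⟩
  -- every line misses some point
  have hmiss : ∀ ℓ ∈ lines, ∃ x : P, x ∉ ℓ := by
    intro ℓ hℓ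
    obtain ⟨ℓ', hℓ', hne⟩ := Finset.exists_mem_ne (show 1 < lines.card by omega) ℓ
    obtain ⟨a, ha, b, hb, hab⟩ := Finset.one_lt_card.mp (hcard ℓ' hℓ')
    by_cases hA : a ∈ ℓ
    · by_cases hB : b ∈ ℓ
      · exact absurd (hu hab hℓ' hℓ ha hb hA hB) hne
      · exact ⟨b, hB⟩
    · exact ⟨a, hA⟩
  set t : P → Finset (Finset P) := fun p => lines.filter (fun ℓ => p ∈ ℓ) with ht
  have hall : ∀ s : Finset P, s.card ≤ (s.biUnion t).card := by
    intro s
    rcases s.eq_empty_or_nonempty with rfl | hs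
    · simp
    by_cases hco : ∃ ℓ ∈ lines, s ⊆ ℓ
    · -- collinear case
      obtain ⟨ℓ, hℓ, hsℓ⟩ := hco
      obtain ⟨x, hx⟩ := hmiss ℓ hℓ
      have hpx : ∀ p ∈ s, p ≠ x := fun p hp h => hx (h ▸ hsℓ hp)
      set g : P → Finset P := fun p => if h : p ≠ x then lfun p x h else ℓ with hg
      have hginj : Set.InjOn g s := by
        intro p hp q hq hpq
        by_contra hne
        have hpx' := hpx p hp
        have hqx' := hpx q hq
        have h1 := lfun_spec p x hpx'
        have h2 := lfun_spec q x hqx'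
        simp only [hg, dif_pos hpx', dif_pos hqx'] at hpq
        have : lfun p x hpx' = ℓ := by
          refine hu hne h1.1 hℓ h1.2.1 ?_ (hsℓ hp) (hsℓ hq)
          rw [hpq]; exact h2.2.1
        exact hx (this ▸ h1.2.2)
      have hsub : s.image g ⊆ s.biUnion t := by
        intro m hm
        obtain ⟨p, hp, rfl⟩ := Finset.mem_image.mp hm
        have hpx' := hpx p hp
        have h1 := lfun_spec p x hpx'
        apply Finset.mem_biUnion.mpr
        refine ⟨p, hp, ?_⟩
        simp only [hg, dif_pos hpx', ht, Finset.mem_filter]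
        exact ⟨h1.1, h1.2.1⟩
      calc s.card = (s.image g).card := (Finset.card_image_of_injOn hginj).symm
        _ ≤ (s.biUnion t).card := Finset.card_le_card hsub
    · -- non-collinear case: use de Bruijn–Erdős
      push_neg at hco
      set Lset : Finset (Finset P) :=
        lines.filter (fun ℓ => ∃ p ∈ s, ∃ q ∈ s, p ≠ q ∧ p ∈ ℓ ∧ q ∈ ℓ) with hLset
      have hnotsub : ∀ ℓ ∈ lines, ∃ u ∈ s, u ∉ ℓ := by
        intro ℓ hℓ
        have := hco ℓ hℓ
        rw [Finset.not_subset] at this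
        exact this
      -- s has at least two points
      have htwo : ∀ p ∈ s, ∃ a ∈ s, a ≠ p := by
        intro p hp
        by_contra hone
        push_neg at hone
        obtain ⟨q, hq⟩ := hother p
        have hpq : p ≠ q := fun h => hq h.symm
        have hsp := lfun_spec p q hpq
        refine hco _ hsp.1 (fun a ha => ?_)
        rw [hone a ha]; exact hsp.2.1
      letI : Membership {x // x ∈ s} {ℓ // ℓ ∈ Lset} :=
        ⟨fun l p => (p : P) ∈ (l : Finset P)⟩
      have hLlines : ∀ ℓ ∈ Lset, ℓ ∈ lines := fun ℓ h => (Finset.mem_filter.mp h).1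
      haveI hHL : Configuration.HasLines {x // x ∈ s} {ℓ // ℓ ∈ Lset} := by
        refine
          { exists_point := ?_
            exists_line := ?_
            eq_or_eq := ?_
            mkLine := fun {p₁ p₂} h =>
              ⟨lfun (p₁ : P) (p₂ : P) (fun hh => h (Subtype.ext hh)), ?_⟩
            mkLine_ax := fun {p₁ p₂} h => ?_ }
          <;> try intro _
        · -- exists_point
          rename_i l
          obtain ⟨u, hu1, hu2⟩ := hnotsub l.1 (hLlines l.1 l.2)
          exact ⟨⟨u, hu1⟩, hu2⟩
        · -- exists_line
          rename_i p
          obtain ⟨a, has, hap⟩ := htwo p.1 p.2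
          have hpa : (p : P) ≠ a := fun h => hap h.symm
          have h1 := lfun_spec p.1 a hpa
          obtain ⟨u, hus, huℓ⟩ := hnotsub _ h1.1
          have hau : a ≠ u := fun h => huℓ (h ▸ h1.2.2)
          have h2 := lfun_spec a u hau
          have hmem : lfun a u hau ∈ Lset := by
            rw [hLset, Finset.mem_filter]
            exact ⟨h2.1, a, has, u, hus, hau, h2.2.1, h2.2.2⟩
          refine ⟨⟨lfun a u hau, hmem⟩, fun hpm => ?_⟩
          have heq : lfun p.1 a hpa = lfun a u hau :=
            hu hpa h1.1 h2.1 h1.2.1 h1.2.2 hpm h2.2.1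
          rw [heq] at huℓ
          exact huℓ h2.2.2
        · -- eq_or_eq
          rename_i p₁
          intro p₂ l₁ l₂ h₁ h₂ h₃ h₄
          by_cases hp : p₁ = p₂
          · exact Or.inl hp
          · refine Or.inr (Subtype.ext ?_)
            exact hu (fun h => hp (Subtype.ext h)) (hLlines l₁.1 l₁.2)
              (hLlines l₂.1 l₂.2) h₁ h₂ h₃ h₄
        · -- mkLine membership
          have hne : (p₁ : P) ≠ (p₂ : P) := fun hh => h (Subtype.ext hh)
          have h1 := lfun_spec p₁.1 p₂.1 hne
          rw [hLset, Finset.mem_filter]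
          exact ⟨h1.1, p₁.1, p₁.2, p₂.1, p₂.2, hne, h1.2.1, h1.2.2⟩
        · -- mkLine_ax
          have hne : (p₁ : P) ≠ (p₂ : P) := fun hh => h (Subtype.ext hh)
          exact (lfun_spec p₁.1 p₂.1 hne).2
      have hcards := Configuration.HasLines.card_le {x // x ∈ s} {ℓ // ℓ ∈ Lset}
      rw [Fintype.card_coe, Fintype.card_coe] at hcards
      have hsub : Lset ⊆ s.biUnion t := by
        intro ℓ hℓ
        rw [hLset, Finset.mem_filter] at hℓ
        obtain ⟨hℓ1, p, hp, -, -, -, hpℓ, -⟩ := hℓ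
        exact Finset.mem_biUnion.mpr ⟨p, hp, Finset.mem_filter.mpr ⟨hℓ1, hpℓ⟩⟩
      exact hcards.trans (Finset.card_le_card hsub)
  obtain ⟨f, hf1, hf2⟩ := (Finset.all_card_le_biUnion_card_iff_exists_injective t).mp hall
  refine ⟨f, hf1, fun p => ?_⟩
  have := hf2 p
  rw [ht, Finset.mem_filter] at this
  exact this
end

section
/- Any family of pairwise distinct Latin squares of order κ ≥ 2, each having all diagonal entries equal to the symbol 1, whose members are pairwise projective, contains at most κ − 1 Latin squares. -/
/-- A Latin square of order κ: each symbol occurs exactly once in every row and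
exactly once in every column. -/
def IsLatinSquare {κ : ℕ} (L : Fin κ → Fin κ → Fin κ) : Prop :=
  (∀ i : Fin κ, Function.Bijective fun c => L i c) ∧
  (∀ c : Fin κ, Function.Bijective fun i => L i c)

/-- Two Latin squares are projective if for every row index `i` of the first and
every row index `j` of the second there is exactly one column where they agree. -/
def ProjectivePair {κ : ℕ} (L₁ L₂ : Fin κ → Fin κ → Fin κ) : Prop :=
  ∀ i j : Fin κ, ∃! c : Fin κ, L₁ i c = L₂ j c

/-- A family of pairwise distinct, pairwise projective Latin squares of order κ ≥ 2,
each with all diagonal entries equal to the symbol 1, has at most κ − 1 members. -/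
theorem mpls_card_le {κ : ℕ} (hκ : 2 ≤ κ) (S : Finset (Fin κ → Fin κ → Fin κ))
    (hlatin : ∀ L ∈ S, IsLatinSquare L)
    (hdiag : ∀ L ∈ S, ∀ i : Fin κ, L i i = ⟨1, by omega⟩)
    (hproj : ∀ L₁ ∈ S, ∀ L₂ ∈ S, L₁ ≠ L₂ → ProjectivePair L₁ L₂) :
    S.card ≤ κ - 1 := by
  set z : Fin κ := ⟨0, by omega⟩
  set o : Fin κ := ⟨1, by omega⟩
  have hzo : z ≠ o := by simp [z, o, Fin.ext_iff]
  have hmem : ∀ L ∈ S, L z o ∈ Finset.univ.erase o := by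
    intro L hL
    refine Finset.mem_erase.2 ⟨?_, Finset.mem_univ _⟩
    intro h
    have h0 : L z z = o := hdiag L hL z
    have := ((hlatin L hL).1 z).1 (h.trans h0.symm)
    exact hzo (this.symm)
  have hinj : ∀ L₁ ∈ S, ∀ L₂ ∈ S, L₁ z o = L₂ z o → L₁ = L₂ := by
    intro L₁ h₁ L₂ h₂ heq
    by_contra hne
    obtain ⟨c, _, huniq⟩ := hproj L₁ h₁ L₂ h₂ hne z z
    have hc1 : o = c := huniq o heq
    have hc0 : z = c := huniq z ((hdiag L₁ h₁ z).trans (hdiag L₂ h₂ z).symm)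
    exact hzo (hc0.trans hc1.symm)
  calc S.card ≤ (Finset.univ.erase o).card :=
        Finset.card_le_card_of_injOn (fun L => L z o) (fun L hL => hmem L hL)
          (fun L₁ h₁ L₂ h₂ h => hinj L₁ h₁ L₂ h₂ h)
    _ = κ - 1 := by
        rw [Finset.card_erase_of_mem (Finset.mem_univ _)]
        simp
end

section
/- If L₁ and L₂ are projective Latin squares of order κ ≥ 3, then L₁ is resolvable: the κ² cells of L₁ can be partitioned into κ pairwise disjoint transversals. -/
/-- A transversal of a Latin square `L`: a set of cells with exactly one cell in each
row, exactly one cell in each column, whose entries comprise all symbols. -/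
def IsTransversal {κ : ℕ} (L : Fin κ → Fin κ → Fin κ) (T : Finset (Fin κ × Fin κ)) :
    Prop :=
  (∀ i : Fin κ, ∃! c : Fin κ, (i, c) ∈ T) ∧
  (∀ c : Fin κ, ∃! i : Fin κ, (i, c) ∈ T) ∧
  (∀ s : Fin κ, ∃ p ∈ T, L p.1 p.2 = s)

/-- If L₁ and L₂ are projective Latin squares of order κ ≥ 3 (with all diagonal entries
equal to the symbol 1), then L₁ is resolvable: its κ² cells can be partitioned into κ
pairwise disjoint transversals. -/
theorem projective_latin_square_resolvable {κ : ℕ} (hκ : 3 ≤ κ)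
    (L₁ L₂ : Fin κ → Fin κ → Fin κ)
    (h₁ : IsLatinSquare L₁) (h₂ : IsLatinSquare L₂)
    (hd₁ : ∀ i : Fin κ, L₁ i i = ⟨1, by omega⟩)
    (hd₂ : ∀ i : Fin κ, L₂ i i = ⟨1, by omega⟩)
    (hproj : ProjectivePair L₁ L₂) :
    ∃ T : Fin κ → Finset (Fin κ × Fin κ),
      (∀ k, IsTransversal L₁ (T k)) ∧
      (∀ p : Fin κ × Fin κ, ∃! k : Fin κ, p ∈ T k) := by
  refine ⟨fun j => Finset.univ.filter (fun p => L₁ p.1 p.2 = L₂ j p.2), fun j => ⟨?_, ?_, ?_⟩, ?_⟩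
  · intro i
    obtain ⟨c, hc, hu⟩ := hproj i j
    exact ⟨c, by simpa using hc, fun c' hc' => hu c' (by simpa using hc')⟩
  · intro c
    obtain ⟨i, hi⟩ := (h₁.2 c).surjective (L₂ j c)
    exact ⟨i, by simpa using hi, fun i' hi' => (h₁.2 c).injective (by simp at hi'; simp [hi', hi])⟩
  · intro s
    obtain ⟨c, hc⟩ := (h₂.1 j).surjective s
    obtain ⟨i, hi⟩ := (h₁.2 c).surjective s
    exact ⟨(i, c), by simp [hi, hc], hi⟩
  · intro p
    obtain ⟨j, hj⟩ := (h₂.2 p.2).surjective (L₁ p.1 p.2)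
    exact ⟨j, by simpa using hj.symm, fun j' hj' => (h₂.2 p.2).injective (by simp at hj'; simp [hj', hj])⟩
end

section
/- Let F be an n × n matrix whose entries are nonnegative integers such that every row sum and every column sum of F equals the same positive integer s. Then there exists a permutation σ of {1, …, n} with F(i, σ(i)) > 0 for all i; that is, at least one term of the determinant expansion of F is nonzero (Theorem D of König). -/
/-- Theorem D of König: if every row sum and every column sum of a square matrix of
nonnegative integers equals the same positive number s, then some term of the
determinant expansion is nonzero, i.e. there is a permutation σ with F i (σ i) > 0
for all i. -/
theorem koenig_theorem_D {n : ℕ} (F : Matrix (Fin n) (Fin n) ℕ) (s : ℕ) (hs : 0 < s)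
    (hrow : ∀ i : Fin n, ∑ j, F i j = s) (hcol : ∀ j : Fin n, ∑ i, F i j = s) :
    ∃ σ : Equiv.Perm (Fin n), ∀ i : Fin n, 0 < F i (σ i) := by
  classical
  set t : Fin n → Finset (Fin n) := fun i => Finset.univ.filter (fun j => 0 < F i j) with ht
  have hall : ∀ A : Finset (Fin n), A.card ≤ (A.biUnion t).card := by
    intro A
    have key : A.card * s ≤ (A.biUnion t).card * s := by
      calc A.card * s = ∑ i ∈ A, ∑ j, F i j := by
            rw [Finset.sum_congr rfl (fun i _ => hrow i), Finset.sum_const, smul_eq_mul]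
        _ = ∑ i ∈ A, ∑ j ∈ A.biUnion t, F i j := by
            apply Finset.sum_congr rfl
            intro i hi
            symm
            apply Finset.sum_subset
            · intro j hj
              exact Finset.mem_univ j
            · intro j _ hj
              by_contra hpos
              exact hj (Finset.mem_biUnion.2 ⟨i, hi, by
                simp [ht, Nat.pos_of_ne_zero hpos]⟩)
        _ = ∑ j ∈ A.biUnion t, ∑ i ∈ A, F i j := Finset.sum_comm
        _ ≤ ∑ j ∈ A.biUnion t, ∑ i, F i j := by
            apply Finset.sum_le_sum
            intro j _
            exact Finset.sum_le_sum_of_subset (Finset.subset_univ A)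
        _ = (A.biUnion t).card * s := by
            rw [Finset.sum_congr rfl (fun j _ => hcol j), Finset.sum_const, smul_eq_mul]
    exact Nat.le_of_mul_le_mul_right key hs
  obtain ⟨f, hfinj, hf⟩ := (Finset.all_card_le_biUnion_card_iff_exists_injective t).1 hall
  have hbij : Function.Bijective f := (Finite.injective_iff_bijective).1 hfinj
  refine ⟨Equiv.ofBijective f hbij, fun i => ?_⟩
  have := hf i
  simpa [ht] using this
end

section
/- Let F be an n × n matrix such that every row and every column of F contains exactly k nonzero entries, where k ≥ 1. Then there exist k permutations σ₁, …, σ_k of {1, …, n} whose graphs {(i, σ_t(i)) : 1 ≤ i ≤ n} are pairwise disjoint and whose union is exactly the set of positions of the nonzero entries of F; in particular the determinant expansion of F contains at least k nonzero terms (Theorem E of König). -/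
open Finset

lemma koenig_aux {n : ℕ} : ∀ (k : ℕ) (S : Finset (Fin n × Fin n)),
    (∀ i : Fin n, (S.filter fun p => p.1 = i).card = k) →
    (∀ j : Fin n, (S.filter fun p => p.2 = j).card = k) →
    ∃ σ : Fin k → Equiv.Perm (Fin n),
      (∀ t : Fin k, ∀ i : Fin n, (i, σ t i) ∈ S) ∧
      (∀ p ∈ S, ∃! t : Fin k, σ t p.1 = p.2) := by
  intro k
  induction k with
  | zero =>
    intro S hrow _
    refine ⟨Fin.elim0, fun t => t.elim0, fun p hp => ?_⟩
    exfalso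
    have : p ∈ S.filter fun q => q.1 = p.1 := by simp [hp]
    have h0 := hrow p.1
    rw [Finset.card_eq_zero] at h0
    simp [h0] at this
  | succ k IH =>
    intro S hrow hcol
    -- Hall's condition for t i := columns j with (i,j) ∈ S
    set t : Fin n → Finset (Fin n) := fun i => (S.filter fun p => p.1 = i).image Prod.snd
      with ht
    have hmem_t : ∀ i j, j ∈ t i ↔ (i, j) ∈ S := by
      intro i j
      simp only [ht, mem_image, mem_filter]
      constructor
      · rintro ⟨⟨a, b⟩, ⟨hS, rfl⟩, rfl⟩; exact hS
      · intro h; exact ⟨(i, j), ⟨h, rfl⟩, rfl⟩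
    have hall : ∀ A : Finset (Fin n), A.card ≤ (A.biUnion t).card := by
      intro A
      set B := A.biUnion t with hB
      have hsub : S.filter (fun p => p.1 ∈ A) ⊆ S.filter (fun p => p.2 ∈ B) := by
        intro p hp
        rw [mem_filter] at hp ⊢
        refine ⟨hp.1, ?_⟩
        rw [hB, mem_biUnion]
        exact ⟨p.1, hp.2, (hmem_t p.1 p.2).2 hp.1⟩
      have h1 : (S.filter (fun p => p.1 ∈ A)).card = (k+1) * A.card := by
        rw [Finset.card_eq_sum_card_fiberwise
          (s := S.filter (fun p => p.1 ∈ A)) (f := Prod.fst) (t := A) (fun p hp => (mem_filter.1 hp).2)]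
        rw [Finset.sum_congr rfl (fun i hi => ?_), Finset.sum_const, smul_eq_mul, mul_comm]
        rw [Finset.filter_filter]
        rw [show (S.filter fun p => p.1 ∈ A ∧ p.1 = i) = S.filter fun p => p.1 = i from
          Finset.filter_congr (fun p _ => by constructor <;> intro h <;>
            simp_all)]
        exact hrow i
      have h2 : (S.filter (fun p => p.2 ∈ B)).card = (k+1) * B.card := by
        rw [Finset.card_eq_sum_card_fiberwise
          (s := S.filter (fun p => p.2 ∈ B)) (f := Prod.snd) (t := B) (fun p hp => (mem_filter.1 hp).2)]
        rw [Finset.sum_congr rfl (fun j hj => ?_), Finset.sum_const, smul_eq_mul, mul_comm]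
        rw [Finset.filter_filter]
        rw [show (S.filter fun p => p.2 ∈ B ∧ p.2 = j) = S.filter fun p => p.2 = j from
          Finset.filter_congr (fun p _ => by constructor <;> intro h <;> simp_all)]
        exact hcol j
      have := Finset.card_le_card hsub
      rw [h1, h2] at this
      exact Nat.le_of_mul_le_mul_left this (Nat.succ_pos k)
    obtain ⟨f, hfinj, hf⟩ := (Finset.all_card_le_biUnion_card_iff_exists_injective t).1 hall
    have hfbij : Function.Bijective f := Finite.injective_iff_bijective.1 hfinj
    set σ₀ : Equiv.Perm (Fin n) := Equiv.ofBijective f hfbij with hσ₀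
    have hσ₀S : ∀ i, (i, σ₀ i) ∈ S := fun i => (hmem_t i (f i)).1 (hf i)
    -- remove the graph of σ₀
    set G : Finset (Fin n × Fin n) := Finset.univ.image (fun i => (i, σ₀ i)) with hG
    have hmemG : ∀ p : Fin n × Fin n, p ∈ G ↔ σ₀ p.1 = p.2 := by
      intro p
      simp only [hG, mem_image, mem_univ, true_and]
      constructor
      · rintro ⟨i, rfl⟩; rfl
      · intro h; exact ⟨p.1, by rw [h]⟩
    have hGsub : G ⊆ S := fun p hp => by
      rw [hmemG] at hp; have := hσ₀S p.1; rwa [hp] at this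
    set S' := S \ G with hS'
    have hrow' : ∀ i : Fin n, (S'.filter fun p => p.1 = i).card = k := by
      intro i
      have heq : S.filter (fun p => p.1 = i)
          = insert (i, σ₀ i) (S'.filter fun p => p.1 = i) := by
        ext ⟨a, b⟩
        simp only [mem_insert, mem_filter, hS', mem_sdiff, hmemG, Prod.mk.injEq]
        constructor
        · rintro ⟨hpS, rfl⟩
          rcases eq_or_ne (σ₀ a) b with h | h
          · left; exact ⟨rfl, h.symm⟩
          · right; exact ⟨⟨hpS, h⟩, rfl⟩
        · rintro (⟨rfl, rfl⟩ | ⟨⟨h1, _⟩, h3⟩)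
          · exact ⟨hσ₀S a, rfl⟩
          · exact ⟨h1, h3⟩
      have hnot : (i, σ₀ i) ∉ (S'.filter fun p => p.1 = i) := by
        simp [hS', hmemG]
      have := hrow i
      rw [heq, Finset.card_insert_of_notMem hnot] at this
      omega
    have hcol' : ∀ j : Fin n, (S'.filter fun p => p.2 = j).card = k := by
      intro j
      have heq : S.filter (fun p => p.2 = j)
          = insert (σ₀.symm j, j) (S'.filter fun p => p.2 = j) := by
        ext ⟨a, b⟩
        simp only [mem_insert, mem_filter, hS', mem_sdiff, hmemG, Prod.mk.injEq]
        constructor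
        · rintro ⟨hpS, rfl⟩
          rcases eq_or_ne (σ₀ a) b with h | h
          · left
            refine ⟨?_, rfl⟩
            rw [← h]; simp
          · right; exact ⟨⟨hpS, h⟩, rfl⟩
        · rintro (⟨rfl, rfl⟩ | ⟨⟨h1, _⟩, h3⟩)
          · exact ⟨by simpa using hσ₀S (σ₀.symm b), rfl⟩
          · exact ⟨h1, h3⟩
      have hnot : (σ₀.symm j, j) ∉ (S'.filter fun p => p.2 = j) := by
        simp [hS', hmemG]
      have := hcol j
      rw [heq, Finset.card_insert_of_notMem hnot] at this
      omega
    obtain ⟨σ', hσ'1, hσ'2⟩ := IH S' hrow' hcol'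
    refine ⟨Fin.cases σ₀ σ', ?_, ?_⟩
    · intro t i
      refine Fin.cases ?_ ?_ t
      · exact hσ₀S i
      · intro s
        simpa using (Finset.sdiff_subset (hσ'1 s i))
    · intro p hp
      rcases eq_or_ne (σ₀ p.1) p.2 with h | h
      · refine ⟨0, h, ?_⟩
        intro t htp
        rcases Fin.eq_zero_or_eq_succ t with rfl | ⟨s, rfl⟩
        · rfl
        · exfalso
          simp only [Fin.cases_succ] at htp
          have hmem := hσ'1 s p.1
          rw [htp] at hmem
          rw [hS', mem_sdiff, hmemG] at hmem
          exact hmem.2 h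
      · have hpS' : p ∈ S' := by
          rw [hS', mem_sdiff, hmemG]; exact ⟨hp, h⟩
        obtain ⟨s, hs1, hs2⟩ := hσ'2 p hpS'
        refine ⟨s.succ, by simpa using hs1, ?_⟩
        intro t htp
        rcases Fin.eq_zero_or_eq_succ t with rfl | ⟨s', rfl⟩
        · simp only [Fin.cases_zero] at htp
          exact absurd htp h
        · simp only [Fin.cases_succ] at htp
          rw [hs2 s' htp]

/-- Theorem E of König: if every row and every column of a square matrix contains
exactly k ≥ 1 nonzero entries, then there are k permutations whose graphs are pairwise
disjoint and together cover exactly the positions of the nonzero entries; in particular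
the determinant expansion contains at least k nonzero terms. -/
theorem koenig_theorem_E {n : ℕ} {α : Type*} [Zero α] [DecidableEq α]
    (F : Matrix (Fin n) (Fin n) α) (k : ℕ) (hk : 1 ≤ k)
    (hrow : ∀ i : Fin n, (Finset.univ.filter fun j => F i j ≠ 0).card = k)
    (hcol : ∀ j : Fin n, (Finset.univ.filter fun i => F i j ≠ 0).card = k) :
    ∃ σ : Fin k → Equiv.Perm (Fin n),
      (∀ t : Fin k, ∀ i : Fin n, F i (σ t i) ≠ 0) ∧
      (∀ i j : Fin n, F i j ≠ 0 → ∃! t : Fin k, σ t i = j) := by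
  set S : Finset (Fin n × Fin n) := Finset.univ.filter (fun p => F p.1 p.2 ≠ 0) with hS
  have hmemS : ∀ p : Fin n × Fin n, p ∈ S ↔ F p.1 p.2 ≠ 0 := by
    intro p; simp [hS]
  have hrowS : ∀ i : Fin n, (S.filter fun p => p.1 = i).card = k := by
    intro i
    rw [← hrow i]
    apply Finset.card_bij (fun p _ => p.2)
    · rintro ⟨a, b⟩ hp
      simp only [mem_filter, hmemS] at hp
      obtain ⟨h1, rfl⟩ := hp
      simpa using h1
    · rintro ⟨a, b⟩ hp ⟨c, d⟩ hq h
      simp only [mem_filter] at hp hq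
      cases hp.2; cases hq.2; cases h; rfl
    · intro j hj
      simp only [mem_filter, mem_univ, true_and] at hj
      exact ⟨(i, j), by simp [hmemS, hj], rfl⟩
  have hcolS : ∀ j : Fin n, (S.filter fun p => p.2 = j).card = k := by
    intro j
    rw [← hcol j]
    apply Finset.card_bij (fun p _ => p.1)
    · rintro ⟨a, b⟩ hp
      simp only [mem_filter, hmemS] at hp
      obtain ⟨h1, rfl⟩ := hp
      simpa using h1
    · rintro ⟨a, b⟩ hp ⟨c, d⟩ hq h
      simp only [mem_filter] at hp hq
      cases hp.2; cases hq.2; cases h; rfl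
    · intro i hi
      simp only [mem_filter, mem_univ, true_and] at hi
      exact ⟨(i, j), by simp [hmemS, hi], rfl⟩
  obtain ⟨σ, h1, h2⟩ := koenig_aux k S hrowS hcolS
  exact ⟨σ, fun t i => (hmemS (i, σ t i)).1 (h1 t i),
    fun i j hij => h2 (i, j) ((hmemS (i, j)).2 hij)⟩
end

section
/- Let F be an n × n matrix (n ≥ 1) with entries in a field. Then every term of the determinant expansion of F is zero (equivalently, for every permutation σ of {1, …, n} there is an index i with F(i, σ(i)) = 0) if and only if there exist a set R of rows and a set C of columns with |R| + |C| = n + 1 such that F(r, c) = 0 for all r ∈ R and c ∈ C (Theorem II of Frobenius). -/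
/-- Theorem II of Frobenius: every term of the determinant expansion of an n × n matrix
F over a field vanishes if and only if F contains an all-zero submatrix formed by a set
R of rows and a set C of columns with |R| + |C| = n + 1. -/
theorem frobenius_theorem_II {n : ℕ} (hn : 1 ≤ n) {K : Type*} [Field K]
    (F : Matrix (Fin n) (Fin n) K) :
    (∀ σ : Equiv.Perm (Fin n), ∃ i : Fin n, F i (σ i) = 0) ↔
      ∃ (R C : Finset (Fin n)), R.card + C.card = n + 1 ∧
        ∀ r ∈ R, ∀ c ∈ C, F r c = 0 := by
  classical
  constructor
  · intro h
    set t : Fin n → Finset (Fin n) := fun i => Finset.univ.filter (fun j => F i j ≠ 0) with ht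
    have hall : ¬ ∀ s : Finset (Fin n), s.card ≤ (s.biUnion t).card := by
      intro hs
      rw [Finset.all_card_le_biUnion_card_iff_exists_injective] at hs
      obtain ⟨f, hf, hmem⟩ := hs
      have hbij : Function.Bijective f := (Finite.injective_iff_bijective).1 hf
      obtain ⟨i, hi⟩ := h (Equiv.ofBijective f hbij)
      have := hmem i
      simp [ht, Equiv.ofBijective] at this
      exact this hi
    push_neg at hall
    obtain ⟨S, hS⟩ := hall
    set N := S.biUnion t with hN
    have hle : N.card + 1 ≤ S.card := hS
    obtain ⟨R, hRS, hRcard⟩ := Finset.exists_subset_card_eq (s := S) (n := N.card + 1) hle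
    refine ⟨R, Nᶜ, ?_, ?_⟩
    · have hNn : N.card ≤ n := by
        simpa using Finset.card_le_card (Finset.subset_univ N)
      rw [hRcard, Finset.card_compl]
      simp only [Fintype.card_fin]
      omega
    · intro r hr c hc
      by_contra hne
      have : c ∈ N := Finset.mem_biUnion.2 ⟨r, hRS hr, by simp [ht, hne]⟩
      exact (Finset.mem_compl.1 hc) this
  · rintro ⟨R, C, hcard, hzero⟩ σ
    have himg : (R.image σ).card = R.card := Finset.card_image_of_injective R σ.injective
    have hinter : ((R.image σ) ∩ C).Nonempty := by
      rw [← Finset.card_pos]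
      have h1 := Finset.card_inter_add_card_union (R.image σ) C
      have h2 : ((R.image σ) ∪ C).card ≤ n := by
        have := Finset.card_le_univ ((R.image σ) ∪ C)
        simpa using this
      omega
    obtain ⟨c, hc⟩ := hinter
    obtain ⟨r, hr, hrc⟩ := Finset.mem_image.1 (Finset.mem_inter.1 hc).1
    exact ⟨r, hrc ▸ hzero r hr c (Finset.mem_inter.1 hc).2⟩
end

section
/- Let κ ≥ 2 and let M be the incidence matrix of a finite projective plane of order κ, i.e., the square 0-1 matrix of order κ² + κ + 1 with rows indexed by the lines and columns indexed by the points of the plane, whose (ℓ, p) entry is 1 exactly when the point p lies on the line ℓ. Then M can be written as a sum of κ + 1 permutation matrices of order κ² + κ + 1. -/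
open Finset

/-- No three of the four points `a, b, c, d` lie on a common line. -/
def NoThreeCollinear {P : Type*} (lines : Finset (Finset P)) (a b c d : P) : Prop :=
  ∀ ℓ ∈ lines,
    ¬(a ∈ ℓ ∧ b ∈ ℓ ∧ c ∈ ℓ) ∧ ¬(a ∈ ℓ ∧ b ∈ ℓ ∧ d ∈ ℓ) ∧
    ¬(a ∈ ℓ ∧ c ∈ ℓ ∧ d ∈ ℓ) ∧ ¬(b ∈ ℓ ∧ c ∈ ℓ ∧ d ∈ ℓ)

/-- A finite projective plane of order κ. -/
def IsProjectivePlane {P : Type*} (lines : Finset (Finset P)) (κ : ℕ) : Prop :=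
  IsGeometry lines ∧
  (∀ ℓ₁ ∈ lines, ∀ ℓ₂ ∈ lines, ℓ₁ ≠ ℓ₂ → ∃ p, p ∈ ℓ₁ ∧ p ∈ ℓ₂) ∧
  (∃ a b c d : P, a ≠ b ∧ a ≠ c ∧ a ≠ d ∧ b ≠ c ∧ b ≠ d ∧ c ≠ d ∧
    NoThreeCollinear lines a b c d) ∧
  (∀ ℓ ∈ lines, ℓ.card = κ + 1)

/-- Regular bipartite decomposition into perfect matchings. -/
lemma decomp_aux {A B : Type*} [Fintype A] [Fintype B] [DecidableEq B]
    (r : ℕ) (g : A → Finset B)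
    (h1 : ∀ a, (g a).card = r)
    (h2 : ∀ b, (univ.filter (fun a => b ∈ g a)).card = r) :
    ∃ f : Fin r → A → B, (∀ t, Function.Bijective (f t)) ∧
      (∀ t a, f t a ∈ g a) ∧ (∀ a, Function.Injective (fun t => f t a)) := by
  classical
  induction r generalizing g with
  | zero =>
    exact ⟨fun t => t.elim0, fun t => t.elim0, fun t => t.elim0, fun a t => t.elim0⟩
  | succ r ih =>
    have hall : ∀ s : Finset A, s.card ≤ (s.biUnion g).card := by
      intro s
      have key : s.card * (r + 1) ≤ (s.biUnion g).card * (r + 1) := by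
        calc s.card * (r + 1) = ∑ a ∈ s, (g a).card := by
              simp [h1, mul_comm]
          _ = ∑ a ∈ s, ∑ b ∈ s.biUnion g, (if b ∈ g a then 1 else 0) := by
              refine Finset.sum_congr rfl fun a ha => ?_
              rw [← Finset.card_filter]
              have : (s.biUnion g).filter (fun b => b ∈ g a) = g a := by
                ext b
                simp only [Finset.mem_filter, Finset.mem_biUnion]
                exact ⟨fun h => h.2, fun h => ⟨⟨a, ha, h⟩, h⟩⟩
              rw [this]
          _ = ∑ b ∈ s.biUnion g, ∑ a ∈ s, (if b ∈ g a then 1 else 0) :=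
              Finset.sum_comm
          _ ≤ ∑ _b ∈ s.biUnion g, (r + 1) := by
              refine Finset.sum_le_sum fun b _ => ?_
              rw [← Finset.card_filter, ← h2 b]
              exact Finset.card_le_card
                (Finset.filter_subset_filter _ (Finset.subset_univ s))
          _ = (s.biUnion g).card * (r + 1) := by simp [mul_comm]
      exact Nat.le_of_mul_le_mul_right key (Nat.succ_pos r)
    obtain ⟨f₀, hf₀inj, hf₀mem⟩ :=
      (Finset.all_card_le_biUnion_card_iff_exists_injective g).mp hall
    -- card A = card B by double counting
    have hcard : Fintype.card A = Fintype.card B := by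
      have e : ∑ a : A, (g a).card = ∑ b : B, (univ.filter (fun a => b ∈ g a)).card := by
        have l : ∀ a : A, (g a).card = ∑ b : B, (if b ∈ g a then 1 else 0) := by
          intro a
          rw [← Finset.card_filter, Finset.filter_univ_mem]
        have rr : ∀ b : B, (univ.filter (fun a => b ∈ g a)).card
            = ∑ a : A, (if b ∈ g a then 1 else 0) := by
          intro b
          rw [Finset.card_filter]
        simp_rw [l, rr]
        exact Finset.sum_comm
      have e2 : Fintype.card A * (r + 1) = Fintype.card B * (r + 1) := by
        have e' := e
        simp only [h1, h2, Finset.sum_const, smul_eq_mul] at e'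
        calc Fintype.card A * (r + 1) = Finset.univ.card * (r + 1) := rfl
          _ = Finset.univ.card * (r + 1) := rfl
          _ = Fintype.card B * (r + 1) := e'
      exact Nat.eq_of_mul_eq_mul_right (Nat.succ_pos r) e2
    have hf₀bij : Function.Bijective f₀ :=
      (Fintype.bijective_iff_injective_and_card f₀).mpr ⟨hf₀inj, hcard⟩
    set g' : A → Finset B := fun a => (g a).erase (f₀ a) with hg'
    have h1' : ∀ a, (g' a).card = r := by
      intro a
      rw [hg']
      simp [Finset.card_erase_of_mem (hf₀mem a), h1]
    have h2' : ∀ b, (univ.filter (fun a => b ∈ g' a)).card = r := by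
      intro b
      obtain ⟨a₀, ha₀⟩ := hf₀bij.2 b
      have heq : univ.filter (fun a => b ∈ g' a)
          = (univ.filter (fun a => b ∈ g a)).erase a₀ := by
        ext a
        simp only [hg', Finset.mem_filter, Finset.mem_erase, Finset.mem_univ,
          true_and]
        constructor
        · rintro ⟨hne, hb⟩
          refine ⟨fun h => hne ?_, hb⟩
          rw [h, ha₀]
        · rintro ⟨hne, hb⟩
          exact ⟨fun h => hne (hf₀inj (by rw [ha₀, ← h])), hb⟩
      have ha₀mem : a₀ ∈ univ.filter (fun a => b ∈ g a) := by
        simp [← ha₀, hf₀mem a₀]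
      rw [heq, Finset.card_erase_of_mem ha₀mem, h2]
      rfl
    obtain ⟨f', hbij', hmem', hinj'⟩ := ih g' h1' h2'
    refine ⟨Fin.cases f₀ f', ?_, ?_, ?_⟩
    · intro t
      induction t using Fin.cases with
      | zero => simpa using hf₀bij
      | succ i => simpa using hbij' i
    · intro t a
      induction t using Fin.cases with
      | zero => simpa using hf₀mem a
      | succ i =>
        simp only [Fin.cases_succ]
        exact Finset.erase_subset _ _ (hmem' i a)
    · intro a t₁ t₂ h
      induction t₁ using Fin.cases with
      | zero =>
        induction t₂ using Fin.cases with
        | zero => rfl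
        | succ j =>
          exfalso
          simp only [Fin.cases_zero, Fin.cases_succ] at h
          have := hmem' j a
          rw [hg', Finset.mem_erase] at this
          exact this.1 h.symm
      | succ i =>
        induction t₂ using Fin.cases with
        | zero =>
          exfalso
          simp only [Fin.cases_zero, Fin.cases_succ] at h
          have := hmem' i a
          rw [hg', Finset.mem_erase] at this
          exact this.1 h
        | succ j =>
          simp only [Fin.cases_succ] at h
          exact congrArg Fin.succ (hinj' a h)

/-- In a projective plane, every point has a line not containing it. -/
lemma exists_missing_line {P : Type*} [DecidableEq P]
    (lines : Finset (Finset P)) (κ : ℕ)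
    (h : IsProjectivePlane lines κ) (p : P) :
    ∃ ℓ ∈ lines, p ∉ ℓ := by
  obtain ⟨⟨huniq, _⟩, _, ⟨a, b, c, d, hab, hac, had, hbc, hbd, hcd, hno⟩, _⟩ := h
  obtain ⟨ℓab, ⟨hℓab, haℓab, hbℓab⟩, _⟩ := huniq a b hab
  obtain ⟨ℓac, ⟨hℓac, haℓac, hcℓac⟩, _⟩ := huniq a c hac
  obtain ⟨ℓcd, ⟨hℓcd, hcℓcd, hdℓcd⟩, _⟩ := huniq c d hcd
  by_cases hpa : p = a
  · refine ⟨ℓcd, hℓcd, fun hp => ?_⟩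
    exact (hno ℓcd hℓcd).2.2.1 ⟨hpa ▸ hp, hcℓcd, hdℓcd⟩
  · by_cases h1 : p ∈ ℓab
    · refine ⟨ℓac, hℓac, fun h2 => ?_⟩
      obtain ⟨ℓ', _, huq⟩ := huniq a p (Ne.symm hpa)
      have e1 : ℓab = ℓ' := huq ℓab ⟨hℓab, haℓab, h1⟩ ▸ rfl
      have e2 : ℓac = ℓ' := huq ℓac ⟨hℓac, haℓac, h2⟩ ▸ rfl
      have : ℓab = ℓac := by
        rw [huq ℓab ⟨hℓab, haℓab, h1⟩, huq ℓac ⟨hℓac, haℓac, h2⟩]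
      exact (hno ℓab hℓab).1 ⟨haℓab, hbℓab, this ▸ hcℓac⟩
    · exact ⟨ℓab, hℓab, h1⟩

/-- In a projective plane of order κ, every point lies on exactly κ + 1 lines. -/
lemma point_degree {P : Type*} [DecidableEq P]
    (lines : Finset (Finset P)) (κ : ℕ)
    (h : IsProjectivePlane lines κ) (p : P) :
    (lines.filter (fun ℓ => p ∈ ℓ)).card = κ + 1 := by
  classical
  obtain ⟨ℓ₀, hℓ₀, hpℓ₀⟩ := exists_missing_line lines κ h p
  obtain ⟨⟨huniq, _⟩, hmeet, _, hdeg⟩ := h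
  rw [← hdeg ℓ₀ hℓ₀]
  -- bijection between lines through p and points of ℓ₀
  have hex : ∀ m ∈ lines.filter (fun ℓ => p ∈ ℓ), ∃ q, q ∈ m ∧ q ∈ ℓ₀ := by
    intro m hm
    rw [Finset.mem_filter] at hm
    refine hmeet m hm.1 ℓ₀ hℓ₀ (fun he => hpℓ₀ (he ▸ hm.2))
  choose i hi₁ hi₂ using hex
  refine Finset.card_bij i (fun m hm => hi₂ m hm) ?_ ?_
  · intro m₁ hm₁ m₂ hm₂ hii
    have hm₁' := Finset.mem_filter.mp hm₁
    have hm₂' := Finset.mem_filter.mp hm₂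
    have hne : p ≠ i m₁ hm₁ := fun he => hpℓ₀ (he ▸ hi₂ m₁ hm₁)
    obtain ⟨ℓ', _, huq⟩ := huniq p (i m₁ hm₁) hne
    rw [huq m₁ ⟨hm₁'.1, hm₁'.2, hi₁ m₁ hm₁⟩,
      huq m₂ ⟨hm₂'.1, hm₂'.2, hii ▸ hi₁ m₂ hm₂⟩]
  · intro q hq
    have hne : p ≠ q := fun he => hpℓ₀ (he ▸ hq)
    obtain ⟨m, ⟨hm, hpm, hqm⟩, huq⟩ := huniq p q hne
    have hmf : m ∈ lines.filter (fun ℓ => p ∈ ℓ) := Finset.mem_filter.mpr ⟨hm, hpm⟩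
    refine ⟨m, hmf, ?_⟩
    -- i m hmf ∈ m ∩ ℓ₀ ; show it equals q
    by_contra hne2
    -- two distinct points i m hmf and q lie on both m and ℓ₀
    have h1 : i m hmf ∈ m := hi₁ m hmf
    have h2 : i m hmf ∈ ℓ₀ := hi₂ m hmf
    obtain ⟨ℓ'', _, huq2⟩ := huniq (i m hmf) q hne2
    have e1 : m = ℓ'' := huq2 m ⟨hm, h1, hqm⟩
    have e2 : ℓ₀ = ℓ'' := huq2 ℓ₀ ⟨hℓ₀, h2, hq⟩
    exact hpℓ₀ (e2 ▸ e1 ▸ hpm)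

/-- The incidence matrix of a finite projective plane of order κ ≥ 2 (rows indexed by
lines, columns by points, with a 1 exactly when the point lies on the line) is a sum of
κ + 1 permutation matrices. -/
theorem incidence_matrix_sum_of_permutation_matrices {κ : ℕ} (hκ : 2 ≤ κ)
    {P : Type*} [Fintype P] [DecidableEq P]
    (lines : Finset (Finset P)) (hplane : IsProjectivePlane lines κ)
    (M : Matrix {ℓ // ℓ ∈ lines} P ℕ)
    (hM : ∀ (ℓ : {ℓ // ℓ ∈ lines}) (p : P), M ℓ p = if p ∈ ℓ.1 then 1 else 0) :
    ∃ f : Fin (κ + 1) → ({ℓ // ℓ ∈ lines} → P),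
      (∀ t, Function.Bijective (f t)) ∧
      ∀ (ℓ : {ℓ // ℓ ∈ lines}) (p : P),
        M ℓ p = ∑ t : Fin (κ + 1), if p = f t ℓ then 1 else 0 := by
  classical
  set A := {ℓ // ℓ ∈ lines}
  have h1 : ∀ ℓ : A, (ℓ.1).card = κ + 1 := fun ℓ => hplane.2.2.2 ℓ.1 ℓ.2
  have h2 : ∀ p : P, (univ.filter (fun ℓ : A => p ∈ ℓ.1)).card = κ + 1 := by
    intro p
    rw [← point_degree lines κ hplane p]
    refine Finset.card_bij (fun ℓ _ => ℓ.1) ?_ ?_ ?_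
    · intro ℓ hℓ
      rw [Finset.mem_filter] at hℓ ⊢
      exact ⟨ℓ.2, hℓ.2⟩
    · intro ℓ₁ _ ℓ₂ _ h
      exact Subtype.ext h
    · intro ℓ hℓ
      rw [Finset.mem_filter] at hℓ
      exact ⟨⟨ℓ, hℓ.1⟩, by simp [hℓ.2], rfl⟩
  obtain ⟨f, hbij, hmem, hinj⟩ := decomp_aux (κ + 1) (fun ℓ : A => ℓ.1) h1 h2
  refine ⟨f, hbij, fun ℓ p => ?_⟩
  rw [hM]
  have himg : Finset.image (fun t => f t ℓ) univ = ℓ.1 := by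
    apply Finset.eq_of_subset_of_card_le
    · intro q hq
      simp only [Finset.mem_image] at hq
      obtain ⟨t, _, ht⟩ := hq
      exact ht ▸ hmem t ℓ
    · rw [h1 ℓ, Finset.card_image_of_injective _ (hinj ℓ)]
      simp
  by_cases hp : p ∈ ℓ.1
  · rw [← himg] at hp
    simp only [Finset.mem_image, Finset.mem_univ, true_and] at hp
    obtain ⟨t₀, ht₀⟩ := hp
    have : (univ.filter (fun t => p = f t ℓ)) = {t₀} := by
      ext t
      simp only [Finset.mem_filter, Finset.mem_univ, true_and, Finset.mem_singleton]
      constructor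
      · intro h
        exact hinj ℓ ((h.symm.trans ht₀.symm).symm ▸ rfl : f t ℓ = f t₀ ℓ)
      · intro h
        rw [h, ht₀]
    rw [← Finset.card_filter, this]
    simp [if_pos (show p ∈ ℓ.1 from himg ▸ Finset.mem_image.mpr ⟨t₀, Finset.mem_univ _, ht₀⟩)]
  · have : ∀ t : Fin (κ + 1), p ≠ f t ℓ := by
      intro t h
      exact hp (h ▸ hmem t ℓ)
    simp [hp, this]
end
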